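/- For a finite connected weighted graph with no isolated vertices, the largest eigenvalue of the normalized Laplacian equals 2 if and only if the graph is bipartite. -/

import Mathlib

open Finset

theorem largest_eigenvalue_eq_two_iff_bipartite
    {V : Type*} [Fintype V] [DecidableEq V]
    (b : V → V → ℝ)
    (hsymm : ∀ x y, b x y = b y x)
    (hnn : ∀ x y, 0 ≤ b x y)
    (hloop : ∀ x, b x x = 0)
    (hiso : ∀ x, 0 < ∑ y, b x y)
    (hconn : ∀ x y : V, Relation.ReflTransGen (fun u v => 0 < b u v) x y)
    (lam : ℝ)
    (hlamMax : IsGreatest {r : ℝ | ∃ f : V → ℝ, f ≠ 0 ∧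
      r = (∑ x, (∑ y, (f x - f y) * (b x y / (∑ z, b x z))) * f x * (∑ y, b x y)) /
        (∑ x, f x ^ 2 * (∑ y, b x y))} lam) :
    lam = 2 ↔ ∃ P : V → Bool, ∀ x y, 0 < b x y → P x ≠ P y := by
  -- numerator rewrite
  have hNum : ∀ f : V → ℝ,
      (∑ x, (∑ y, (f x - f y) * (b x y / (∑ z, b x z))) * f x * (∑ y, b x y))
        = ∑ x, ∑ y, (f x - f y) * b x y * f x := by
    intro f
    refine Finset.sum_congr rfl fun x _ => ?_
    have hne : (∑ z, b x z) ≠ 0 := (hiso x).ne'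
    rw [Finset.sum_mul, Finset.sum_mul]
    refine Finset.sum_congr rfl fun y _ => ?_
    field_simp
  -- key identity
  have hKey : ∀ f : V → ℝ,
      2 * (∑ x, f x ^ 2 * (∑ y, b x y)) - (∑ x, ∑ y, (f x - f y) * b x y * f x)
        = (1/2) * ∑ x, ∑ y, b x y * (f x + f y) ^ 2 := by
    intro f
    have hswap : (∑ x, ∑ y, b x y * f x ^ 2) = ∑ x, ∑ y, b x y * f y ^ 2 := by
      rw [Finset.sum_comm]
      exact Finset.sum_congr rfl fun y _ => Finset.sum_congr rfl fun x _ => by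
        rw [hsymm]
    have hD : (∑ x, f x ^ 2 * (∑ y, b x y)) = ∑ x, ∑ y, b x y * f x ^ 2 := by
      refine Finset.sum_congr rfl fun x _ => ?_
      rw [Finset.mul_sum]
      exact Finset.sum_congr rfl fun y _ => by ring
    rw [hD]
    have e1 : 2 * (∑ x, ∑ y, b x y * f x ^ 2) - (∑ x, ∑ y, (f x - f y) * b x y * f x)
        = ∑ x, ∑ y, (2 * (b x y * f x ^ 2) - (f x - f y) * b x y * f x) := by
      rw [Finset.mul_sum, ← Finset.sum_sub_distrib]
      refine Finset.sum_congr rfl fun x _ => ?_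
      rw [Finset.mul_sum, ← Finset.sum_sub_distrib]
    have e2 : (1/2) * (∑ x, ∑ y, b x y * (f x + f y) ^ 2)
        = ∑ x, ∑ y, (1/2) * (b x y * (f x + f y) ^ 2) := by
      rw [Finset.mul_sum]
      exact Finset.sum_congr rfl fun x _ => by rw [Finset.mul_sum]
    rw [e1, e2]
    have hterm : ∀ x y, 2 * (b x y * f x ^ 2) - (f x - f y) * b x y * f x
        = (1/2) * (b x y * (f x + f y) ^ 2)
          + ((1/2) * (b x y * f x ^ 2) - (1/2) * (b x y * f y ^ 2)) := fun x y => by ring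
    simp_rw [hterm, Finset.sum_add_distrib, Finset.sum_sub_distrib, ← Finset.mul_sum]
    rw [hswap, sub_self, add_zero]
  -- nonnegativity of S
  have hSnn : ∀ f : V → ℝ, (0:ℝ) ≤ ∑ x, ∑ y, b x y * (f x + f y) ^ 2 := by
    intro f
    refine Finset.sum_nonneg fun x _ => Finset.sum_nonneg fun y _ => ?_
    exact mul_nonneg (hnn x y) (sq_nonneg _)
  -- positivity of denominator for f ≠ 0
  have hDpos : ∀ f : V → ℝ, f ≠ 0 → (0:ℝ) < ∑ x, f x ^ 2 * (∑ y, b x y) := by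
    intro f hf
    obtain ⟨x0, hx0⟩ := Function.ne_iff.mp hf
    refine Finset.sum_pos' (fun x _ => mul_nonneg (sq_nonneg _) (hiso x).le) ⟨x0, Finset.mem_univ _, ?_⟩
    have h1 : 0 < f x0 ^ 2 := lt_of_le_of_ne (sq_nonneg _) (Ne.symm (pow_ne_zero 2 hx0))
    exact mul_pos h1 (hiso x0)
  -- upper bound: every element of the set is ≤ 2
  have hUB : ∀ r ∈ {r : ℝ | ∃ f : V → ℝ, f ≠ 0 ∧
      r = (∑ x, (∑ y, (f x - f y) * (b x y / (∑ z, b x z))) * f x * (∑ y, b x y)) /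
        (∑ x, f x ^ 2 * (∑ y, b x y))}, r ≤ 2 := by
    rintro r ⟨f, hf, rfl⟩
    rw [hNum f]
    rw [div_le_iff₀ (hDpos f hf)]
    have := hKey f
    have := hSnn f
    linarith
  constructor
  · -- forward: lam = 2 → bipartite
    intro hlam
    obtain ⟨f, hf, hr⟩ := hlamMax.1
    rw [hlam, hNum f] at hr
    have hD := hDpos f hf
    have hN : (∑ x, ∑ y, (f x - f y) * b x y * f x)
        = 2 * (∑ x, f x ^ 2 * (∑ y, b x y)) := by
      field_simp at hr
      have e : (∑ x, ∑ y, f x * (f x - f y) * b x y) = ∑ x, ∑ y, (f x - f y) * b x y * f x :=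
        Finset.sum_congr rfl fun x _ => Finset.sum_congr rfl fun y _ => by ring
      linarith
    have hS0 : (∑ x, ∑ y, b x y * (f x + f y) ^ 2) = 0 := by
      have := hKey f
      linarith
    have hzero : ∀ x y, b x y * (f x + f y) ^ 2 = 0 := by
      intro x y
      have h1 := (Finset.sum_eq_zero_iff_of_nonneg
        (fun x _ => Finset.sum_nonneg fun y _ => mul_nonneg (hnn x y) (sq_nonneg _))).mp hS0
      have h2 := (Finset.sum_eq_zero_iff_of_nonneg
        (fun y _ => mul_nonneg (hnn x y) (sq_nonneg _))).mp
          (h1 x (Finset.mem_univ x)) y (Finset.mem_univ y)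
      exact h2
    have hedge : ∀ x y, 0 < b x y → f y = -f x := by
      intro x y hb
      have := hzero x y
      have h2 : (f x + f y) ^ 2 = 0 := by
        rcases mul_eq_zero.mp this with h | h
        · exact absurd h hb.ne'
        · exact h
      have := pow_eq_zero_iff (n := 2) (by norm_num) |>.mp h2
      linarith
    obtain ⟨x0, hx0⟩ := Function.ne_iff.mp hf
    have hfn : ∀ x, f x ≠ 0 := by
      intro x
      have h := hconn x0 x
      induction h with
      | refl => exact hx0
      | tail _ hstep ih =>
        rw [hedge _ _ hstep]
        exact neg_ne_zero.mpr ih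
    refine ⟨fun x => decide (0 < f x), fun x y hb => ?_⟩
    have hfy : f y = -f x := hedge x y hb
    have hx := hfn x
    intro hPeq
    simp only [decide_eq_decide] at hPeq
    rcases hx.lt_or_gt with h | h
    · have : ¬ (0 < f x) := not_lt.mpr h.le
      have hy : 0 < f y := by rw [hfy]; linarith
      exact this (hPeq.mpr hy)
    · have hy : ¬ (0 < f y) := by rw [hfy]; linarith
      exact hy (hPeq.mp h)
  · -- backward: bipartite → lam = 2
    rintro ⟨P, hP⟩
    obtain ⟨f0, hf0, _⟩ := hlamMax.1
    have hV : Nonempty V := by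
      by_contra h
      exact hf0 (funext fun x => absurd (Nonempty.intro x) h)
    obtain ⟨x0⟩ := hV
    set f : V → ℝ := fun x => if P x then 1 else -1 with hfdef
    have hf : f ≠ 0 := by
      intro h
      have := congrFun h x0
      simp only [hfdef, Pi.zero_apply] at this
      split at this <;> norm_num at this
    have hS0 : (∑ x, ∑ y, b x y * (f x + f y) ^ 2) = 0 := by
      refine Finset.sum_eq_zero fun x _ => Finset.sum_eq_zero fun y _ => ?_
      rcases eq_or_lt_of_le (hnn x y) with h | h
      · rw [← h]; ring
      · have hne := hP x y h
        have : f x + f y = 0 := by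
          simp only [hfdef]
          cases hPx : P x <;> cases hPy : P y <;> simp_all
        rw [this]; ring
    have hN : (∑ x, ∑ y, (f x - f y) * b x y * f x)
        = 2 * (∑ x, f x ^ 2 * (∑ y, b x y)) := by
      have := hKey f
      rw [hS0] at this
      linarith
    have h2mem : (2:ℝ) ∈ {r : ℝ | ∃ f : V → ℝ, f ≠ 0 ∧
        r = (∑ x, (∑ y, (f x - f y) * (b x y / (∑ z, b x z))) * f x * (∑ y, b x y)) /
          (∑ x, f x ^ 2 * (∑ y, b x y))} := by
      refine ⟨f, hf, ?_⟩
      rw [hNum f, hN]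
      have hD := hDpos f hf
      rw [eq_div_iff hD.ne']
    exact le_antisymm (hUB lam hlamMax.1) (hlamMax.2 h2mem)
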